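/- Let Q be a symmetric real n×n matrix and suppose x ∈ Δ^{n-1} is the unique global minimizer of y ↦ yᵀQy over Δ^{n-1}. Let K := {i : x_i > 0} and k := |K|, and assume k ≥ 2. Then there exists i ∈ K such that (1/k) Σ_{j∈K} Q_{ij} < min_{1≤r≤n} Q_{rr}. -/
import Mathlib


open Matrix

/-- Deterministic row-average necessary condition: if `x` is the unique global
minimizer of `y ↦ yᵀQy` over the standard simplex, with support `K` of
cardinality `k ≥ 2`, then some active row `i ∈ K` satisfies
`(1/k)Σ_{j∈K} Q_{ij} < min_r Q_{rr}`. -/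
theorem row_average_necessary_condition (n : ℕ)
    (Q : Matrix (Fin n) (Fin n) ℝ) (hQ : Q.IsSymm)
    (x : Fin n → ℝ) (hx : x ∈ stdSimplex ℝ (Fin n))
    (hmin : ∀ y ∈ stdSimplex ℝ (Fin n), x ⬝ᵥ Q.mulVec x ≤ y ⬝ᵥ Q.mulVec y)
    (huniq : ∀ y ∈ stdSimplex ℝ (Fin n),
        (∀ z ∈ stdSimplex ℝ (Fin n), y ⬝ᵥ Q.mulVec y ≤ z ⬝ᵥ Q.mulVec z) → y = x)
    (K : Finset (Fin n)) (hK : K = Finset.univ.filter fun i => 0 < x i)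
    (hk : 2 ≤ K.card) :
    ∃ i ∈ K, (1 / (K.card : ℝ)) * ∑ j ∈ K, Q i j < ⨅ r : Fin n, Q r r := by
  classical
  set m := x ⬝ᵥ Q.mulVec x with hm
  have hx0 : ∀ i, 0 ≤ x i := hx.1
  have hx1 : ∑ i, x i = 1 := hx.2
  have hQe : ∀ i j, Q i j = Q j i := fun i j => (hQ.apply i j).symm
  have hxK : ∀ i, i ∉ K → x i = 0 := by
    intro i hi
    rw [hK] at hi
    simp only [Finset.mem_filter, Finset.mem_univ, true_and, not_lt] at hi
    exact le_antisymm hi (hx0 i)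
  have hxKpos : ∀ i ∈ K, 0 < x i := by
    intro i hi; rw [hK] at hi
    simpa using hi
  have hn2 : 2 ≤ n := le_trans hk (by simpa using K.card_le_univ)
  have hKsum : ∑ i ∈ K, x i = 1 := by
    rw [← hx1]
    exact Finset.sum_subset K.subset_univ (fun i _ hi => hxK i hi)
  -- symmetry of the bilinear form
  have hsymm : ∀ a b : Fin n → ℝ, a ⬝ᵥ Q.mulVec b = b ⬝ᵥ Q.mulVec a := by
    intro a b
    simp only [dotProduct, mulVec, Finset.mul_sum]
    rw [Finset.sum_comm]
    refine Finset.sum_congr rfl fun i _ => Finset.sum_congr rfl fun j _ => ?_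
    rw [hQe j i]; ring
  -- Step A : m < Q r r for each r
  have hA : ∀ r, m < Q r r := by
    intro r
    have her : (Pi.single r 1 : Fin n → ℝ) ∈ stdSimplex ℝ (Fin n) := by
      constructor
      · intro i
        by_cases h : i = r <;> simp [Pi.single_apply, h]
      · simp
    have hfe : (Pi.single r 1 : Fin n → ℝ) ⬝ᵥ Q.mulVec (Pi.single r 1) = Q r r := by
      simp [mulVec_single]
    have hle : m ≤ Q r r := by rw [← hfe]; exact hmin _ her
    rcases lt_or_eq_of_le hle with h | h
    · exact h
    · exfalso
      have hxe : (Pi.single r 1 : Fin n → ℝ) = x := by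
        refine huniq _ her fun z hz => ?_
        rw [hfe, ← h]
        exact hmin z hz
      have hsub : K ⊆ {r} := by
        intro i hi
        have hpos := hxKpos i hi
        rw [← hxe] at hpos
        by_contra hir
        simp only [Finset.mem_singleton] at hir
        rw [Pi.single_apply, if_neg hir] at hpos
        exact lt_irrefl _ hpos
      have := Finset.card_le_card hsub
      simp at this
      omega
  -- Step B1 : (Qx) is minimized on K
  have hB1 : ∀ l ∈ K, ∀ j : Fin n, Q.mulVec x l ≤ Q.mulVec x j := by
    intro l hl j
    by_contra hcon
    push_neg at hcon
    have hjl : j ≠ l := by rintro rfl; exact lt_irrefl _ hcon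
    set d : ℝ := Q.mulVec x l - Q.mulVec x j with hd_def
    have hd : 0 < d := by simp [hd_def]; linarith
    set v : Fin n → ℝ := Pi.single j 1 - Pi.single l 1 with hv
    set q : ℝ := v ⬝ᵥ Q.mulVec v with hq
    set t : ℝ := min (x l) (d / (|q| + 1)) with ht
    have habs : (0:ℝ) < |q| + 1 := by positivity
    have ht0 : 0 < t := lt_min (hxKpos l hl) (div_pos hd habs)
    have htl : t ≤ x l := min_le_left _ _
    have htq : t * (|q| + 1) ≤ d := by
      rw [← le_div_iff₀ habs]
      exact min_le_right _ _
    -- membership of the perturbed point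
    have hy : x + t • v ∈ stdSimplex ℝ (Fin n) := by
      constructor
      · intro i
        by_cases hil : i = l
        · subst hil
          have : v i = -1 := by
            simp [hv, Pi.single_apply, hjl.symm]
          simp only [Pi.add_apply, Pi.smul_apply, smul_eq_mul, this]
          linarith
        · have : (0:ℝ) ≤ v i := by
            simp only [hv, Pi.sub_apply, Pi.single_apply]
            by_cases hij : i = j <;> simp [hij, hil, hjl]
          have := mul_nonneg ht0.le this
          simp only [Pi.add_apply, Pi.smul_apply, smul_eq_mul]
          linarith [hx0 i]
      · have hvs : ∑ i, v i = 0 := by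
          simp [hv, Finset.sum_sub_distrib]
        simp only [Pi.add_apply, Pi.smul_apply, smul_eq_mul]
        rw [Finset.sum_add_distrib, hx1, ← Finset.mul_sum, hvs]
        ring
    -- expansion of the quadratic form
    have hvx : v ⬝ᵥ Q.mulVec x = -d := by
      simp [hv, hd_def, sub_dotProduct]
    have hexp : (x + t • v) ⬝ᵥ Q.mulVec (x + t • v) = m + 2*t*(v ⬝ᵥ Q.mulVec x) + t^2 * q := by
      rw [hq, hm, mulVec_add, mulVec_smul, dotProduct_add, add_dotProduct, add_dotProduct]
      simp only [dotProduct_smul, smul_dotProduct, smul_eq_mul]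
      rw [hsymm x v]
      ring
    have hlt : (x + t • v) ⬝ᵥ Q.mulVec (x + t • v) < m := by
      rw [hexp, hvx]
      have h1 : t * q ≤ t * |q| := mul_le_mul_of_nonneg_left (le_abs_self q) ht0.le
      nlinarith
    exact absurd (hmin _ hy) (not_le.mpr hlt)
  -- Step B2 : (Qx) l = m on K
  have hB2 : ∀ l ∈ K, Q.mulVec x l = m := by
    intro l hl
    have hconst : ∀ i ∈ K, x i * Q.mulVec x i = x i * Q.mulVec x l := by
      intro i hi
      have h1 := hB1 l hl i
      have h2 := hB1 i hi l
      rw [le_antisymm h1 h2]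
    have : m = ∑ i ∈ K, x i * Q.mulVec x i := by
      rw [hm, dotProduct]
      exact (Finset.sum_subset K.subset_univ
        (fun i _ hi => by rw [hxK i hi, zero_mul])).symm
    rw [this, Finset.sum_congr rfl hconst, ← Finset.sum_mul, hKsum, one_mul]
  -- Step C : some row average is ≤ m
  have hkey : ∃ i ∈ K, (1 / (K.card : ℝ)) * ∑ j ∈ K, Q i j ≤ m := by
    by_contra hcon
    push_neg at hcon
    have hkpos : (0:ℝ) < (K.card : ℝ) := by
      have : 0 < K.card := by omega
      exact_mod_cast this
    have hS : ∑ i ∈ K, x i * ((1 / (K.card : ℝ)) * ∑ j ∈ K, Q i j) = m := by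
      have h1 : ∀ j ∈ K, ∑ i ∈ K, x i * Q i j = m := by
        intro j hj
        have h2 : Q.mulVec x j = ∑ i, Q j i * x i := by
          simp [mulVec, dotProduct]
        have h3 : ∑ i ∈ K, x i * Q i j = ∑ i, Q j i * x i := by
          rw [Finset.sum_subset K.subset_univ
            (fun i _ hi => by rw [hxK i hi, zero_mul])]
          exact Finset.sum_congr rfl fun i _ => by rw [hQe i j]; ring
        rw [h3, ← h2]
        exact hB2 j hj
      calc ∑ i ∈ K, x i * ((1 / (K.card : ℝ)) * ∑ j ∈ K, Q i j)
          = (1 / (K.card : ℝ)) * ∑ i ∈ K, ∑ j ∈ K, x i * Q i j := by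
            rw [Finset.mul_sum]
            refine Finset.sum_congr rfl fun i _ => ?_
            rw [← Finset.mul_sum]; ring
        _ = (1 / (K.card : ℝ)) * ∑ j ∈ K, ∑ i ∈ K, x i * Q i j := by
            rw [Finset.sum_comm]
        _ = (1 / (K.card : ℝ)) * ∑ j ∈ K, m := by
            rw [Finset.sum_congr rfl h1]
        _ = m := by
            rw [Finset.sum_const, nsmul_eq_mul]
            field_simp
    have hlt : ∑ i ∈ K, x i * m < ∑ i ∈ K, x i * ((1 / (K.card : ℝ)) * ∑ j ∈ K, Q i j) := by
      have hne : K.Nonempty := Finset.card_pos.mp (by omega)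
      refine Finset.sum_lt_sum (fun i hi => ?_) ⟨hne.choose, hne.choose_spec, ?_⟩
      · exact mul_le_mul_of_nonneg_left (hcon i hi).le (hx0 i)
      · exact mul_lt_mul_of_pos_left (hcon _ hne.choose_spec) (hxKpos _ hne.choose_spec)
    rw [hS, ← Finset.sum_mul, hKsum, one_mul] at hlt
    exact lt_irrefl _ hlt
  -- conclude
  obtain ⟨i, hi, hle⟩ := hkey
  refine ⟨i, hi, lt_of_le_of_lt hle ?_⟩
  haveI : Nonempty (Fin n) := ⟨⟨0, by omega⟩⟩
  obtain ⟨r0, hr0⟩ := Finite.exists_min fun r => Q r r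
  have hinf : ⨅ r : Fin n, Q r r = Q r0 r0 :=
    le_antisymm (ciInf_le (Finite.bddBelow_range _) r0) (le_ciInf hr0)
  rw [hinf]
  exact hA r0
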